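/- Let 0 ≤ j ≤ n−1 be an integer and let A be a symmetric n×n matrix with entries in {0,1}, with eigenvalues λ_1 ≥ ⋯ ≥ λ_n. Then λ_1(A) − λ_{n−j}(A) ≤ (n/2)·(1 + √((j+2)/(j+1))). -/

import Mathlib

open Matrix Finset

lemma aux_trace_sq {n : ℕ} (A : Matrix (Fin n) (Fin n) ℝ) (hA : A.IsHermitian) :
    ∑ k, hA.eigenvalues k ^ 2 = Matrix.trace (A * A) := by
  set U : Matrix (Fin n) (Fin n) ℝ := (hA.eigenvectorUnitary : Matrix (Fin n) (Fin n) ℝ) with hU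
  have hUU : star U * U = 1 := mem_unitaryGroup_iff'.mp hA.eigenvectorUnitary.2
  have hspec : A = U * Matrix.diagonal hA.eigenvalues * star U := by
    have := hA.spectral_theorem
    simpa using this
  have key : A * A
      = U * (Matrix.diagonal hA.eigenvalues * Matrix.diagonal hA.eigenvalues) * star U := by
    conv_lhs => rw [hspec]
    calc U * Matrix.diagonal hA.eigenvalues * star U * (U * Matrix.diagonal hA.eigenvalues * star U)
        = U * (Matrix.diagonal hA.eigenvalues * ((star U * U) * Matrix.diagonal hA.eigenvalues)) * star U := by
          simp only [mul_assoc]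
      _ = _ := by rw [hUU, one_mul]
  rw [key, Matrix.trace_mul_cycle, ← mul_assoc, hUU, one_mul, Matrix.diagonal_mul_diagonal,
    Matrix.trace_diagonal]
  simp [pow_two]

lemma aux_rayleigh {n : ℕ} (A : Matrix (Fin n) (Fin n) ℝ) (hA : A.IsHermitian)
    (v : Fin n → ℝ) (s : ℝ) (hs : ∀ k, hA.eigenvalues k ≤ s) :
    v ⬝ᵥ (A *ᵥ v) ≤ s * (v ⬝ᵥ v) := by
  set U : Matrix (Fin n) (Fin n) ℝ := (hA.eigenvectorUnitary : Matrix (Fin n) (Fin n) ℝ) with hU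
  have hUU : U * star U = 1 := mem_unitaryGroup_iff.mp hA.eigenvectorUnitary.2
  have hspec : A = U * Matrix.diagonal hA.eigenvalues * star U := by
    have := hA.spectral_theorem
    simpa using this
  have hdiag : Matrix.PosSemidef (Matrix.diagonal (fun k => s - hA.eigenvalues k)) :=
    Matrix.PosSemidef.diagonal (fun k => sub_nonneg.mpr (hs k))
  have hB : Matrix.PosSemidef (U * Matrix.diagonal (fun k => s - hA.eigenvalues k) * Uᴴ) :=
    hdiag.mul_mul_conjTranspose_same U
  have hBeq : U * Matrix.diagonal (fun k => s - hA.eigenvalues k) * Uᴴ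
      = s • (1 : Matrix (Fin n) (Fin n) ℝ) - A := by
    have h1 : Matrix.diagonal (fun k => s - hA.eigenvalues k)
        = s • (1 : Matrix (Fin n) (Fin n) ℝ) - Matrix.diagonal hA.eigenvalues := by
      rw [smul_one_eq_diagonal, ← Matrix.diagonal_sub]
    rw [h1, Matrix.mul_sub, Matrix.sub_mul, ← Matrix.star_eq_conjTranspose, ← hspec]
    congr 1
    rw [Matrix.mul_smul, mul_one, Matrix.smul_mul, hUU]
  have h0 := hB.dotProduct_mulVec_nonneg v
  rw [hBeq] at h0
  rw [star_trivial, Matrix.sub_mulVec, dotProduct_sub, Matrix.smul_mulVec,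
    Matrix.one_mulVec, dotProduct_smul, smul_eq_mul, sub_nonneg] at h0
  exact h0

lemma aux_final (j n s t c : ℝ) (hn : 0 ≤ n) (hjp : 0 < j + 1)
    (hc2 : c ^ 2 = (j + 2) / (j + 1)) (hc0 : 0 ≤ c)
    (hkey : s ^ 2 + (j + 1) * t ^ 2 ≤ n * s) :
    s + t ≤ n / 2 * (1 + c) := by
  have ha : (s - n/2)^2 + (j+1) * t^2 ≤ n^2/4 := by nlinarith
  have hcau : ((s - n/2) + t)^2 * (j+1) ≤ (j+2) * ((s - n/2)^2 + (j+1)*t^2) := by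
    nlinarith [sq_nonneg ((s - n/2) - (j+1)*t)]
  have h1 : ((s - n/2) + t)^2 ≤ (j+2)/(j+1) * (n^2/4) := by
    rw [div_mul_eq_mul_div, le_div_iff₀ hjp]
    have hmul := mul_le_mul_of_nonneg_left ha (show (0:ℝ) ≤ j+2 by linarith)
    linarith
  have hfin2 : ((s - n/2) + t)^2 ≤ (c * (n/2))^2 := by
    calc ((s - n/2) + t)^2 ≤ (j+2)/(j+1) * (n^2/4) := h1
      _ = (c * (n/2))^2 := by rw [mul_pow, hc2]; ring
  have hcn : 0 ≤ c * (n/2) := by positivity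
  have : (s - n/2) + t ≤ c * (n/2) := by
    rcases le_or_gt ((s - n/2) + t) 0 with h | h
    · linarith
    · nlinarith
  linarith

/-- For `0 ≤ j ≤ n - 1` and a symmetric `n × n` `(0,1)`-matrix `A` with
eigenvalues `μ` in nonincreasing order, `λ_1(A) - λ_{n-j}(A) ≤ (n/2)(1 + √((j+2)/(j+1)))`. -/
theorem spread_0j_upper_bound (n j : ℕ) (hj : j + 1 ≤ n)
    (A : Matrix (Fin n) (Fin n) ℝ) (hA : A.IsHermitian)
    (hA01 : ∀ a b, A a b = 0 ∨ A a b = 1)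
    (μ : Fin n → ℝ) (hmono : Antitone μ)
    (hperm : Finset.univ.val.map μ = Finset.univ.val.map hA.eigenvalues) :
    μ ⟨0, by omega⟩ - μ ⟨n - j - 1, by omega⟩ ≤
      ((n : ℝ) / 2) * (1 + Real.sqrt (((j : ℝ) + 2) / ((j : ℝ) + 1))) := by
  have key : ∀ (p : 0 < n) (q : n - j - 1 < n), μ ⟨0, p⟩ - μ ⟨n - j - 1, q⟩ ≤
      ((n : ℝ) / 2) * (1 + Real.sqrt (((j : ℝ) + 2) / ((j : ℝ) + 1))) := by
    intro p q
    set E := hA.eigenvalues with hE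
    set c := Real.sqrt (((j : ℝ) + 2) / ((j : ℝ) + 1)) with hcdef
    have hjp : (0:ℝ) < (j:ℝ) + 1 := by positivity
    have hfrac : (1:ℝ) ≤ ((j:ℝ)+2)/((j:ℝ)+1) := by
      rw [le_div_iff₀ hjp]; linarith
    have hc1 : (1:ℝ) ≤ c := by
      have h := Real.sqrt_le_sqrt hfrac
      rwa [Real.sqrt_one] at h
    have hc2 : c^2 = ((j:ℝ)+2)/((j:ℝ)+1) := Real.sq_sqrt (by positivity)
    set s := μ ⟨0, p⟩ with hs
    -- multiset facts
    have hsum2 : ∑ k, μ k ^ 2 = ∑ k, E k ^ 2 := by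
      have h1 := congrArg (Multiset.map (fun x : ℝ => x ^ 2)) hperm
      rw [Multiset.map_map, Multiset.map_map] at h1
      have h2 := congrArg Multiset.sum h1
      simpa [Finset.sum_eq_multiset_sum, Function.comp] using h2
    have hEs : ∀ k, E k ≤ s := by
      intro k
      have hmem : E k ∈ Finset.univ.val.map μ := by
        rw [hperm]
        exact Multiset.mem_map_of_mem _ (Finset.mem_univ k)
      obtain ⟨i, _, hi⟩ := Multiset.mem_map.mp hmem
      rw [← hi]
      exact hmono (show (⟨0, p⟩ : Fin n) ≤ i by simp [Fin.le_def])
    -- trace and Rayleigh facts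
    have hones : (fun _ : Fin n => (1:ℝ)) ⬝ᵥ (A *ᵥ fun _ => (1:ℝ)) = ∑ i, ∑ k, A i k := by
      simp [dotProduct, Matrix.mulVec]
    have htr : Matrix.trace (A * A) = ∑ i, ∑ k, A i k := by
      rw [Matrix.trace]
      congr 1
      ext i
      rw [Matrix.diag]
      rw [Matrix.mul_apply]
      congr 1
      ext k
      have hsym : A k i = A i k := by
        have := congrFun (congrFun hA i) k
        simpa using this
      rw [hsym]
      rcases hA01 i k with h | h <;> rw [h] <;> ring
    have hEsq : ∑ k, E k ^ 2 ≤ (n:ℝ) * s := by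
      have h1 := aux_rayleigh A hA (fun _ => (1:ℝ)) s hEs
      have h2 : (fun _ : Fin n => (1:ℝ)) ⬝ᵥ (fun _ : Fin n => (1:ℝ)) = (n:ℝ) := by
        simp [dotProduct]
      rw [hones, h2] at h1
      rw [aux_trace_sq A hA, htr]
      linarith [h1]
    have hmusq : ∑ k, μ k ^ 2 ≤ (n:ℝ) * s := by rw [hsum2]; exact hEsq
    have hssq : s ^ 2 ≤ ∑ k, μ k ^ 2 := by
      have := Finset.single_le_sum (f := fun k => μ k ^ 2)
        (fun k _ => sq_nonneg (μ k)) (Finset.mem_univ (⟨0, p⟩ : Fin n))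
      simpa using this
    have hsn : s ≤ (n:ℝ) := by nlinarith [hssq, hmusq, sq_nonneg s]
    by_cases hcase : 0 ≤ μ ⟨n - j - 1, q⟩
    · -- easy case
      have : s - μ ⟨n - j - 1, q⟩ ≤ s := by linarith
      have hrhs : (n:ℝ) ≤ ((n : ℝ) / 2) * (1 + c) := by nlinarith [Nat.cast_nonneg (α := ℝ) n]
      linarith
    · push_neg at hcase
      set t := -μ ⟨n - j - 1, q⟩ with htdef
      have ht : 0 < t := by simp [htdef]; linarith
      have hs0 : (0:ℝ) ≤ s := by nlinarith [hssq, hmusq, sq_nonneg s, hjp, Nat.cast_nonneg (α := ℝ) n]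
      have hn2 : j + 2 ≤ n := by
        by_contra h
        have hn1 : n = j + 1 := by omega
        have hidx : (⟨n - j - 1, q⟩ : Fin n) = ⟨0, p⟩ := Fin.ext (by simp; omega)
        rw [hidx] at hcase
        linarith
      -- sum over bottom j+1 indices
      set S : Finset (Fin n) := Finset.Ici (⟨n - j - 1, q⟩ : Fin n) with hSdef
      have h0S : (⟨0, p⟩ : Fin n) ∉ S := by
        rw [hSdef]
        simp only [Finset.mem_Ici, Fin.le_def, not_le]
        omega
      have hScard : S.card = j + 1 := by
        rw [hSdef, Fin.card_Ici]; simp only [Fin.val_mk]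
        omega
      have hSsum : ((j:ℝ)+1) * t^2 ≤ ∑ k ∈ S, μ k ^ 2 := by
        have hterm : ∀ k ∈ S, t^2 ≤ μ k ^ 2 := by
          intro k hk
          rw [hSdef, Finset.mem_Ici] at hk
          have hle : μ k ≤ μ ⟨n - j - 1, q⟩ := hmono hk
          have h2 : μ k ≤ -t := by rw [htdef]; linarith
          nlinarith [ht]
        have := Finset.card_nsmul_le_sum S (fun k => μ k ^ 2) (t^2) hterm
        rw [hScard] at this
        calc ((j:ℝ)+1) * t^2 = (j+1) • t^2 := by
              rw [nsmul_eq_mul]; push_cast; ring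
          _ ≤ _ := this
      have hsplit : s^2 + ∑ k ∈ S, μ k ^ 2 ≤ ∑ k, μ k ^ 2 := by
        have hsub : insert (⟨0, p⟩ : Fin n) S ⊆ Finset.univ := Finset.subset_univ _
        have := Finset.sum_le_sum_of_subset_of_nonneg hsub
          (fun k _ _ => sq_nonneg (μ k))
        rw [Finset.sum_insert h0S] at this
        exact this
      have hkey : s^2 + ((j:ℝ)+1) * t^2 ≤ (n:ℝ) * s := by linarith
      have hfin := aux_final (j:ℝ) (n:ℝ) s t c (Nat.cast_nonneg n) hjp hc2
        (le_trans zero_le_one hc1) hkey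
      have : s - μ ⟨n - j - 1, q⟩ = s + t := by rw [htdef]; ring
      rw [this]
      linarith
  exact key _ _
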